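/- arXiv:1912.13287 — 3 statements merged into one kernel-verified Lean document; each statement's English description precedes it below -/
import Mathlib

section
/- All levelled sequences with respect to a fixed interval sequence S = (A,B) having the same volume L are similar (i.e., permutations of one another). -/
open Finset

/-- A sequence is graphic if it is the degree sequence of a simple graph. -/
def IsGraphic {n : ℕ} (D : Fin n → ℕ) : Prop :=
  ∃ (G : SimpleGraph (Fin n)) (_ : DecidableRel G.Adj), ∀ i, G.degree i = D i

/-- The levelling operation: decrement entry `α` by 1, increment entry `β` by 1. -/
def lvl {n : ℕ} (D : Fin n → ℕ) (α β : Fin n) : Fin n → ℕ :=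
  fun i => if i = α then D α - 1 else if i = β then D β + 1 else D i

/-- The spread `φ(D) = ∑_{r<s} |d_r - d_s|`. -/
def spread {n : ℕ} (D : Fin n → ℕ) : ℤ :=
  ∑ r : Fin n, ∑ s : Fin n, if r < s then |(D r : ℤ) - (D s : ℤ)| else 0

/-- `A ≤ D ≤ B` coordinatewise. -/
def Between {n : ℕ} (A D B : Fin n → ℕ) : Prop := ∀ i, A i ≤ D i ∧ D i ≤ B i

/-- Volume of `D` w.r.t. lower boundary `A`. -/
def vol {n : ℕ} (A D : Fin n → ℕ) : ℕ := ∑ i, (D i - A i)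

/-- An interval sequence `(A,B)` is realizable if it contains a graphic sequence. -/
def Realizable {n : ℕ} (A B : Fin n → ℕ) : Prop := ∃ D, IsGraphic D ∧ Between A D B

/-- Two sequences are similar if one is a permutation of the other. -/
def SeqSimilar {n : ℕ} (D D' : Fin n → ℕ) : Prop :=
  ∃ σ : Equiv.Perm (Fin n), ∀ i, D' i = D (σ i)

/-- `D` is levelled w.r.t. `(A,B)`: it lies in `[A,B]` and no levelling operation staying
within `[A,B]` strictly decreases its spread. -/
def IsLevelled {n : ℕ} (A B D : Fin n → ℕ) : Prop :=
  Between A D B ∧ ∀ α β : Fin n, α ≠ β → D β < D α → Between A (lvl D α β) B →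
    spread D ≤ spread (lvl D α β)

/-- One levelling step from `D` to `D'` staying within `[A,B]`. -/
def LvlStep {n : ℕ} (A B D D' : Fin n → ℕ) : Prop :=
  ∃ α β : Fin n, α ≠ β ∧ D β < D α ∧ D' = lvl D α β ∧ Between A D' B

/-- `F(ℓ,S) = ∑_i (min(ℓ,b_i) - min(ℓ,a_i))`. -/
noncomputable def Fvol {n : ℕ} (A B : Fin n → ℕ) (ℓ : ℝ) : ℝ :=
  ∑ i, (min ℓ (B i : ℝ) - min ℓ (A i : ℝ))

/-- Upper deviation `δ_U(D,S) = ∑_i max(0, d_i - b_i)` (truncated subtraction). -/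
def devU {n : ℕ} (D B : Fin n → ℕ) : ℕ := ∑ i, (D i - B i)

/-- Lower deviation `δ_L(D,S) = ∑_i max(0, a_i - d_i)` (truncated subtraction). -/
def devL {n : ℕ} (D A : Fin n → ℕ) : ℕ := ∑ i, (A i - D i)

/-- `R` lies in `[B,⊤]`, `(A,R)` is realizable, and `∑ (r_i - b_i)` is minimum. -/
def MinUpper {n : ℕ} (A B R : Fin n → ℕ) : Prop :=
  (∀ i, B i ≤ R i ∧ R i ≤ n - 1) ∧ Realizable A R ∧
  ∀ R' : Fin n → ℕ, (∀ i, B i ≤ R' i ∧ R' i ≤ n - 1) → Realizable A R' →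
    ∑ i, (R i - B i) ≤ ∑ i, (R' i - B i)

lemma two_mul_spread {n : ℕ} (D : Fin n → ℕ) :
    2 * spread D = ∑ r : Fin n, ∑ s : Fin n, |(D r : ℤ) - (D s : ℤ)| := by
  have key : ∀ r s : Fin n, |(D r : ℤ) - (D s : ℤ)| =
      (if r < s then |(D r : ℤ) - (D s : ℤ)| else 0) +
      (if s < r then |(D s : ℤ) - (D r : ℤ)| else 0) := by
    intro r s
    rcases lt_trichotomy r s with h | h | h
    · simp [h, asymm h]
    · simp [h]
    · simp [h, asymm h, abs_sub_comm]
  have h1 : ∑ r : Fin n, ∑ s : Fin n, |(D r : ℤ) - (D s : ℤ)| =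
      (∑ r : Fin n, ∑ s : Fin n, if r < s then |(D r : ℤ) - (D s : ℤ)| else 0) +
      (∑ r : Fin n, ∑ s : Fin n, if s < r then |(D s : ℤ) - (D r : ℤ)| else 0) := by
    rw [← Finset.sum_add_distrib]
    refine Finset.sum_congr rfl fun r _ => ?_
    rw [← Finset.sum_add_distrib]
    exact Finset.sum_congr rfl fun s _ => key r s
  have h2 : (∑ r : Fin n, ∑ s : Fin n, if s < r then |(D s : ℤ) - (D r : ℤ)| else 0)
      = spread D := by
    rw [Finset.sum_comm]; rfl
  rw [h1, h2]; unfold spread; ring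

lemma spread_lvl_lt {n : ℕ} (D : Fin n → ℕ) (α β : Fin n) (hne : α ≠ β)
    (h2 : D β + 2 ≤ D α) : spread (lvl D α β) < spread D := by
  set D' := lvl D α β with hD'
  have ha' : (D' α : ℤ) = (D α : ℤ) - 1 := by
    simp only [hD', lvl, if_pos rfl]
    have : 1 ≤ D α := by omega
    push_cast [Nat.cast_sub this]; ring
  have hb' : (D' β : ℤ) = (D β : ℤ) + 1 := by
    simp only [hD', lvl, if_neg (Ne.symm hne), if_pos rfl]; push_cast; ring
  have hc' : ∀ c : Fin n, c ≠ α → c ≠ β → (D' c : ℤ) = (D c : ℤ) := by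
    intro c h1 h3; simp [hD', lvl, h1, h3]
  set u : Finset (Fin n) := Finset.univ \ {α, β} with hu
  have hαu : α ∉ insert β u := by simp [hu, hne]
  have hβu : β ∉ u := by simp [hu]
  have huniv : (Finset.univ : Finset (Fin n)) = insert α (insert β u) := by
    ext x; simp [hu]; tauto
  have habs : (2:ℤ) ≤ D α - D β := by push_cast; omega
  -- decompose any double sum
  have dec : ∀ E : Fin n → ℕ,
      (∑ r : Fin n, ∑ s : Fin n, |(E r : ℤ) - (E s : ℤ)|) =
      (|(E α:ℤ) - E α| + (|(E α:ℤ) - E β| + ∑ s ∈ u, |(E α:ℤ) - E s|)) +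
      ((|(E β:ℤ) - E α| + (|(E β:ℤ) - E β| + ∑ s ∈ u, |(E β:ℤ) - E s|)) +
       ∑ r ∈ u, (|(E r:ℤ) - E α| + (|(E r:ℤ) - E β| + ∑ s ∈ u, |(E r:ℤ) - E s|))) := by
    intro E
    rw [huniv, Finset.sum_insert hαu, Finset.sum_insert hβu]
    congr 1
    · rw [Finset.sum_insert hαu, Finset.sum_insert hβu]
    congr 1
    · rw [Finset.sum_insert hαu, Finset.sum_insert hβu]
    · refine Finset.sum_congr rfl fun r _ => ?_
      rw [Finset.sum_insert hαu, Finset.sum_insert hβu]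
  have goal2 : (∑ r : Fin n, ∑ s : Fin n, |(D' r : ℤ) - (D' s : ℤ)|) <
      ∑ r : Fin n, ∑ s : Fin n, |(D r : ℤ) - (D s : ℤ)| := by
    rw [dec D', dec D]
    have cu : ∀ c ∈ u, c ≠ α ∧ c ≠ β := by intro c hc; simp [hu] at hc; tauto
    have hrow : ∀ c ∈ u, |(D' α:ℤ) - D' c| + |(D' β:ℤ) - D' c| ≤
        |(D α:ℤ) - D c| + |(D β:ℤ) - D c| := by
      intro c hc
      obtain ⟨h1, h3⟩ := cu c hc
      rw [ha', hb', hc' c h1 h3]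
      rcases abs_cases ((D α:ℤ) - 1 - D c) with ⟨e1,_⟩|⟨e1,_⟩ <;>
      rcases abs_cases ((D β:ℤ) + 1 - D c) with ⟨e2,_⟩|⟨e2,_⟩ <;>
      rcases abs_cases ((D α:ℤ) - D c) with ⟨e3,_⟩|⟨e3,_⟩ <;>
      rcases abs_cases ((D β:ℤ) - D c) with ⟨e4,_⟩|⟨e4,_⟩ <;> omega
    have hcol : ∀ c ∈ u, |(D' c:ℤ) - D' α| + |(D' c:ℤ) - D' β| ≤
        |(D c:ℤ) - D α| + |(D c:ℤ) - D β| := by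
      intro c hc
      obtain ⟨h1, h3⟩ := cu c hc
      rw [ha', hb', hc' c h1 h3]
      rcases abs_cases ((D c:ℤ) - ((D α:ℤ) - 1)) with ⟨e1,_⟩|⟨e1,_⟩ <;>
      rcases abs_cases ((D c:ℤ) - ((D β:ℤ) + 1)) with ⟨e2,_⟩|⟨e2,_⟩ <;>
      rcases abs_cases ((D c:ℤ) - D α) with ⟨e3,_⟩|⟨e3,_⟩ <;>
      rcases abs_cases ((D c:ℤ) - D β) with ⟨e4,_⟩|⟨e4,_⟩ <;> omega
    have hmid : ∀ c ∈ u, |(D' c:ℤ) - D' c| = |(D c:ℤ) - D c| := by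
      intro c hc; obtain ⟨h1, h3⟩ := cu c hc; rw [hc' c h1 h3]
    have huu : ∀ c ∈ u, (∑ s ∈ u, |(D' c:ℤ) - D' s|) = ∑ s ∈ u, |(D c:ℤ) - D s| := by
      intro c hc
      obtain ⟨h1, h3⟩ := cu c hc
      refine Finset.sum_congr rfl fun s hs => ?_
      obtain ⟨h4, h5⟩ := cu s hs
      rw [hc' c h1 h3, hc' s h4 h5]
    have hab : |(D' α:ℤ) - D' β| = |(D α:ℤ) - D β| - 2 := by
      rw [ha', hb', abs_of_nonneg (by omega), abs_of_nonneg (by omega)]; ring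
    have hba : |(D' β:ℤ) - D' α| = |(D β:ℤ) - D α| - 2 := by
      rw [ha', hb', abs_sub_comm ((D β:ℤ)+1), abs_sub_comm (D β:ℤ), abs_of_nonneg (by omega), abs_of_nonneg (by omega)]; ring
    have s1 : (∑ s ∈ u, |(D' α:ℤ) - D' s|) + (∑ s ∈ u, |(D' β:ℤ) - D' s|) ≤
        (∑ s ∈ u, |(D α:ℤ) - D s|) + (∑ s ∈ u, |(D β:ℤ) - D s|) := by
      rw [← Finset.sum_add_distrib, ← Finset.sum_add_distrib]
      exact Finset.sum_le_sum hrow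
    have s2 : (∑ r ∈ u, (|(D' r:ℤ) - D' α| + (|(D' r:ℤ) - D' β| + ∑ s ∈ u, |(D' r:ℤ) - D' s|)))
        ≤ ∑ r ∈ u, (|(D r:ℤ) - D α| + (|(D r:ℤ) - D β| + ∑ s ∈ u, |(D r:ℤ) - D s|)) := by
      refine Finset.sum_le_sum fun r hr => ?_
      have := hcol r hr
      have := huu r hr
      omega
    simp only [sub_self, abs_zero]
    rw [hab, hba]
    omega
  have t1 := two_mul_spread D
  have t2 := two_mul_spread D'
  omega

def clampAB {n : ℕ} (A B : Fin n → ℕ) (ℓ : ℕ) (i : Fin n) : ℕ := min (max ℓ (A i)) (B i)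

lemma levelled_structure {n : ℕ} (A B D : Fin n → ℕ) (hAB : ∀ i, A i ≤ B i)
    (hD : IsLevelled A B D) :
    ∃ ℓ : ℕ, ∀ i, clampAB A B ℓ i ≤ D i ∧ D i ≤ clampAB A B (ℓ+1) i := by
  obtain ⟨hB, hlev⟩ := hD
  by_cases hall : ∀ i, D i = A i
  · exact ⟨0, fun i => by have := hAB i; have := hall i; unfold clampAB; omega⟩
  · push_neg at hall
    obtain ⟨j, hj⟩ := hall
    have hSne : (Finset.univ.filter (fun i => A i < D i)).Nonempty := by
      refine ⟨j, ?_⟩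
      simp only [Finset.mem_filter, Finset.mem_univ, true_and]
      have := (hB j).1; omega
    obtain ⟨α, hαS, hαmax⟩ := Finset.exists_max_image _ D hSne
    simp only [Finset.mem_filter, Finset.mem_univ, true_and] at hαS
    have hmax : ∀ i, A i < D i → D i ≤ D α := by
      intro i hi
      exact hαmax i (by simp only [Finset.mem_filter, Finset.mem_univ, true_and]; exact hi)
    refine ⟨D α - 1, fun i => ?_⟩
    have hM1 : 1 ≤ D α := by omega
    have hup : D i ≤ clampAB A B (D α - 1 + 1) i := by
      have h1 : D i ≤ B i := (hB i).2
      rcases lt_or_ge (A i) (D i) with h | h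
      · have := hmax i h; unfold clampAB; omega
      · unfold clampAB; omega
    refine ⟨?_, hup⟩
    by_contra hlow
    push_neg at hlow
    have h1 : A i ≤ D i := (hB i).1
    have h2 : D i < B i ∧ D i + 2 ≤ D α := by
      unfold clampAB at hlow; omega
    have hiα : i ≠ α := by intro h; rw [h] at h2; omega
    have hbtw : Between A (lvl D α i) B := by
      intro k
      have hk := hB k
      have hkα := hB α
      unfold lvl
      split_ifs with e1 e2 <;> subst_eqs <;> omega
    have := hlev α i (Ne.symm hiα) (by omega) hbtw
    have := spread_lvl_lt D α i (Ne.symm hiα) h2.2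
    omega

lemma counts_eq_same {n : ℕ} (A B C D : Fin n → ℕ) (ℓC : ℕ)
    (hc : ∀ i, clampAB A B ℓC i ≤ C i ∧ C i ≤ clampAB A B (ℓC+1) i)
    (hd : ∀ i, clampAB A B ℓC i ≤ D i ∧ D i ≤ clampAB A B (ℓC+1) i)
    (hsum : ∑ i, C i = ∑ i, D i) :
    ∀ v, (Finset.univ.filter (fun i => C i = v)).card
      = (Finset.univ.filter (fun i => D i = v)).card := by
  · -- same level
    set lo := clampAB A B ℓC with hlo
    set hi := clampAB A B (ℓC+1) with hhi
    have flexval : ∀ i, lo i ≠ hi i → lo i = ℓC ∧ hi i = ℓC + 1 := by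
      intro i; simp only [hlo, hhi]; unfold clampAB; omega
    have hCsub : (∑ i, (C i - lo i)) + ∑ i, lo i = ∑ i, C i := by
      rw [← Finset.sum_add_distrib]
      exact Finset.sum_congr rfl fun i _ => by have := (hc i).1; omega
    have hDsub : (∑ i, (D i - lo i)) + ∑ i, lo i = ∑ i, D i := by
      rw [← Finset.sum_add_distrib]
      exact Finset.sum_congr rfl fun i _ => by have := (hd i).1; omega
    have hk : (∑ i, (C i - lo i)) = ∑ i, (D i - lo i) := by omega
    intro v
    rw [Finset.card_filter, Finset.card_filter]
    rw [← Finset.sum_filter_add_sum_filter_not Finset.univ (fun i => lo i = hi i)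
      (fun i => if C i = v then 1 else 0)]
    rw [← Finset.sum_filter_add_sum_filter_not Finset.univ (fun i => lo i = hi i)
      (fun i => if D i = v then 1 else 0)]
    have hCfix : ∀ i, lo i = hi i → C i = lo i := by
      intro i h; have := hc i; omega
    have hDfix : ∀ i, lo i = hi i → D i = lo i := by
      intro i h; have := hd i; omega
    have fxpart : (∑ i ∈ Finset.univ.filter (fun i => lo i = hi i), if C i = v then 1 else 0)
        = ∑ i ∈ Finset.univ.filter (fun i => lo i = hi i), if D i = v then 1 else 0 := by
      refine Finset.sum_congr rfl fun i hi' => ?_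
      simp only [Finset.mem_filter] at hi'
      rw [hCfix i hi'.2, hDfix i hi'.2]
    -- sums of (X - lo) over flex set equal full sums
    have subC : (∑ i ∈ Finset.univ.filter (fun i => ¬ lo i = hi i), (C i - lo i))
        = ∑ i, (C i - lo i) := by
      rw [← Finset.sum_filter_add_sum_filter_not Finset.univ (fun i => lo i = hi i)
        (fun i => C i - lo i)]
      have : (∑ i ∈ Finset.univ.filter (fun i => lo i = hi i), (C i - lo i)) = 0 := by
        refine Finset.sum_eq_zero fun i hi' => ?_
        simp only [Finset.mem_filter] at hi'
        rw [hCfix i hi'.2]; omega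
      omega
    have subD : (∑ i ∈ Finset.univ.filter (fun i => ¬ lo i = hi i), (D i - lo i))
        = ∑ i, (D i - lo i) := by
      rw [← Finset.sum_filter_add_sum_filter_not Finset.univ (fun i => lo i = hi i)
        (fun i => D i - lo i)]
      have : (∑ i ∈ Finset.univ.filter (fun i => lo i = hi i), (D i - lo i)) = 0 := by
        refine Finset.sum_eq_zero fun i hi' => ?_
        simp only [Finset.mem_filter] at hi'
        rw [hDfix i hi'.2]; omega
      omega
    rw [fxpart]
    have flexpart : (∑ i ∈ Finset.univ.filter (fun i => ¬ lo i = hi i), if C i = v then 1 else 0)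
        = ∑ i ∈ Finset.univ.filter (fun i => ¬ lo i = hi i), if D i = v then 1 else 0 := by
      rcases eq_or_ne (ℓC + 1) v with rfl | hv1
      · have eC : ∀ i ∈ Finset.univ.filter (fun i => ¬ lo i = hi i),
            (if C i = ℓC + 1 then 1 else 0) = C i - lo i := by
          intro i hi'
          simp only [Finset.mem_filter] at hi'
          obtain ⟨e1, e2⟩ := flexval i hi'.2
          have := hc i
          split_ifs with h <;> omega
        have eD : ∀ i ∈ Finset.univ.filter (fun i => ¬ lo i = hi i),
            (if D i = ℓC + 1 then 1 else 0) = D i - lo i := by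
          intro i hi'
          simp only [Finset.mem_filter] at hi'
          obtain ⟨e1, e2⟩ := flexval i hi'.2
          have := hd i
          split_ifs with h <;> omega
        rw [Finset.sum_congr rfl eC, Finset.sum_congr rfl eD, subC, subD, hk]
      rcases eq_or_ne ℓC v with rfl | hv2
      · have eC : ∀ i ∈ Finset.univ.filter (fun i => ¬ lo i = hi i),
            (if C i = ℓC then 1 else 0) + (C i - lo i) = 1 := by
          intro i hi'
          simp only [Finset.mem_filter] at hi'
          obtain ⟨e1, e2⟩ := flexval i hi'.2
          have := hc i
          split_ifs with h <;> omega
        have eD : ∀ i ∈ Finset.univ.filter (fun i => ¬ lo i = hi i),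
            (if D i = ℓC then 1 else 0) + (D i - lo i) = 1 := by
          intro i hi'
          simp only [Finset.mem_filter] at hi'
          obtain ⟨e1, e2⟩ := flexval i hi'.2
          have := hd i
          split_ifs with h <;> omega
        have sC := Finset.sum_congr rfl eC
        have sD := Finset.sum_congr rfl eD
        rw [Finset.sum_add_distrib] at sC sD
        rw [subC] at sC
        rw [subD] at sD
        simp only [Finset.sum_const, smul_eq_mul, mul_one] at sC sD
        omega
      · have eC : ∀ i ∈ Finset.univ.filter (fun i => ¬ lo i = hi i),
            (if C i = v then 1 else 0) = 0 := by
          intro i hi'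
          simp only [Finset.mem_filter] at hi'
          obtain ⟨e1, e2⟩ := flexval i hi'.2
          have := hc i
          split_ifs with h <;> omega
        have eD : ∀ i ∈ Finset.univ.filter (fun i => ¬ lo i = hi i),
            (if D i = v then 1 else 0) = 0 := by
          intro i hi'
          simp only [Finset.mem_filter] at hi'
          obtain ⟨e1, e2⟩ := flexval i hi'.2
          have := hd i
          split_ifs with h <;> omega
        rw [Finset.sum_congr rfl eC, Finset.sum_congr rfl eD]
    rw [flexpart]

lemma counts_eq_of_le {n : ℕ} (A B C D : Fin n → ℕ) (ℓC ℓD : ℕ) (hle : ℓC ≤ ℓD)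
    (hc : ∀ i, clampAB A B ℓC i ≤ C i ∧ C i ≤ clampAB A B (ℓC+1) i)
    (hd : ∀ i, clampAB A B ℓD i ≤ D i ∧ D i ≤ clampAB A B (ℓD+1) i)
    (hsum : ∑ i, C i = ∑ i, D i) :
    ∀ v, (Finset.univ.filter (fun i => C i = v)).card
      = (Finset.univ.filter (fun i => D i = v)).card := by
  rcases eq_or_lt_of_le hle with rfl | hlt
  · exact counts_eq_same A B C D ℓC hc hd hsum
  · -- different levels: C = D
    have mono1 : ∀ i, clampAB A B (ℓC+1) i ≤ clampAB A B ℓD i := by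
      intro i; unfold clampAB; omega
    have s1 : ∑ i, C i ≤ ∑ i, clampAB A B (ℓC+1) i :=
      Finset.sum_le_sum fun i _ => (hc i).2
    have s2 : ∑ i, clampAB A B (ℓC+1) i ≤ ∑ i, clampAB A B ℓD i :=
      Finset.sum_le_sum fun i _ => mono1 i
    have s3 : ∑ i, clampAB A B ℓD i ≤ ∑ i, D i :=
      Finset.sum_le_sum fun i _ => (hd i).1
    have e1 : ∀ i ∈ Finset.univ, C i = clampAB A B (ℓC+1) i :=
      (Finset.sum_eq_sum_iff_of_le fun i _ => (hc i).2).1 (by omega)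
    have e2 : ∀ i ∈ Finset.univ, clampAB A B (ℓC+1) i = clampAB A B ℓD i :=
      (Finset.sum_eq_sum_iff_of_le fun i _ => mono1 i).1 (by omega)
    have e3 : ∀ i ∈ Finset.univ, clampAB A B ℓD i = D i :=
      (Finset.sum_eq_sum_iff_of_le fun i _ => (hd i).1).1 (by omega)
    have hCD : C = D := by
      funext i
      rw [e1 i (Finset.mem_univ i), e2 i (Finset.mem_univ i), e3 i (Finset.mem_univ i)]
    rw [hCD]
    intro v; rfl

lemma similar_of_counts {n : ℕ} (C D : Fin n → ℕ)
    (h : ∀ v, (Finset.univ.filter (fun i => C i = v)).card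
      = (Finset.univ.filter (fun i => D i = v)).card) : SeqSimilar C D := by
  classical
  have e : ∀ v : ℕ, {i // D i = v} ≃ {i // C i = v} := fun v =>
    Fintype.equivOfCardEq (by rw [Fintype.card_subtype, Fintype.card_subtype, h v])
  exact ⟨Equiv.ofFiberEquiv e, fun i => (Equiv.ofFiberEquiv_map e i).symm⟩

theorem stmt_8 {n : ℕ} (A B C D : Fin n → ℕ)
    (hS : ∀ i, A i ≤ B i ∧ B i ≤ n - 1)
    (hC : IsLevelled A B C) (hD : IsLevelled A B D)
    (hvol : vol A C = vol A D) :
    SeqSimilar C D := by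
  have hAB : ∀ i, A i ≤ B i := fun i => (hS i).1
  obtain ⟨ℓC, hcC⟩ := levelled_structure A B C hAB hC
  obtain ⟨ℓD, hcD⟩ := levelled_structure A B D hAB hD
  have hsc : (∑ i, (C i - A i)) + ∑ i, A i = ∑ i, C i := by
    rw [← Finset.sum_add_distrib]
    exact Finset.sum_congr rfl fun i _ => by have := (hC.1 i).1; omega
  have hsd : (∑ i, (D i - A i)) + ∑ i, A i = ∑ i, D i := by
    rw [← Finset.sum_add_distrib]
    exact Finset.sum_congr rfl fun i _ => by have := (hD.1 i).1; omega
  have hvol' : (∑ i, (C i - A i)) = ∑ i, (D i - A i) := hvol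
  have hsum : ∑ i, C i = ∑ i, D i := by omega
  rcases le_total ℓC ℓD with h | h
  · exact similar_of_counts C D (counts_eq_of_le A B C D ℓC ℓD h hcC hcD hsum)
  · exact similar_of_counts C D
      (fun v => (counts_eq_of_le A B D C ℓD ℓC h hcD hcC hsum.symm v).symm)
end

section
/- Let S = (A,B) be an interval sequence, and let R be a sequence with B ≤ R ≤ (n−1,...,n−1) such that (A,R) is realizable and Σ_i (r_i − b_i) is minimum among all such sequences. Then for every graphic sequence D_0 with A ≤ D_0 ≤ R, the deviation δ(D_0,S) equals min{δ(D,S) : D graphic} = Σ_i (r_i − b_i). -/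
open Finset

/-- Two sequences are similar if one is a permutation of the other. -/
def SimilarSeq {n : ℕ} (D D' : Fin n → ℕ) : Prop :=
  ∃ σ : Equiv.Perm (Fin n), ∀ i, D' i = D (σ i)

lemma exists_nonadj {n : ℕ} (G : SimpleGraph (Fin n)) [DecidableRel G.Adj]
    (i : Fin n) (h : G.degree i < n - 1) : ∃ u, u ≠ i ∧ ¬ G.Adj i u := by
  by_contra hc
  push_neg at hc
  have hsub : (univ.erase i) ⊆ G.neighborFinset i := by
    intro u hu
    simp only [mem_erase, mem_univ, and_true] at hu
    rw [SimpleGraph.mem_neighborFinset]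
    exact hc u hu
  have h1 : (univ.erase i).card ≤ G.degree i := Finset.card_le_card hsub
  have h2 : (univ.erase i).card = n - 1 := by
    rw [Finset.card_erase_of_mem (mem_univ i), Finset.card_univ, Fintype.card_fin]
  omega

lemma step_graphic {n : ℕ} (D : Fin n → ℕ) (hD : IsGraphic D) (i : Fin n)
    (hi : D i < n - 1) :
    ∃ u, u ≠ i ∧ IsGraphic (fun v => if v = i ∨ v = u then D v + 1 else D v) := by
  obtain ⟨G, _, hG⟩ := hD
  obtain ⟨u, hui, hnadj⟩ := exists_nonadj G i (by rw [hG]; exact hi)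
  refine ⟨u, hui, ?_⟩
  let G' : SimpleGraph (Fin n) :=
    { Adj := fun a b => G.Adj a b ∨ (a = i ∧ b = u) ∨ (a = u ∧ b = i)
      symm := by
        constructor
        intro a b h
        rcases h with h | ⟨rfl, rfl⟩ | ⟨rfl, rfl⟩
        · exact Or.inl (G.adj_symm h)
        · exact Or.inr (Or.inr ⟨rfl, rfl⟩)
        · exact Or.inr (Or.inl ⟨rfl, rfl⟩)
      loopless := by
        constructor
        intro a h
        rcases h with h | ⟨rfl, rfl⟩ | ⟨rfl, rfl⟩
        · exact G.loopless.irrefl a h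
        · exact hui rfl
        · exact hui rfl }
  refine ⟨G', fun a b => inferInstanceAs (Decidable (G.Adj a b ∨ (a = i ∧ b = u) ∨ (a = u ∧ b = i))), ?_⟩
  have hdegG : ∀ v, (univ.filter (G.Adj v)).card = D v := by
    intro v
    rw [← hG v]
    unfold SimpleGraph.degree
    rw [SimpleGraph.neighborFinset_eq_filter]
  intro v
  have hdeg : G'.degree v = (univ.filter (fun b => G.Adj v b ∨ (v = i ∧ b = u) ∨ (v = u ∧ b = i))).card := by
    unfold SimpleGraph.degree
    rw [SimpleGraph.neighborFinset_eq_filter]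
  rw [hdeg]
  show _ = if v = i ∨ v = u then D v + 1 else D v
  by_cases hvi : v = i
  · subst hvi
    rw [if_pos (Or.inl rfl)]
    have hset : univ.filter (fun b => G.Adj v b ∨ (v = v ∧ b = u) ∨ (v = u ∧ b = v))
        = insert u (univ.filter (G.Adj v)) := by
      ext b
      simp only [mem_filter, mem_univ, true_and, mem_insert]
      have := fun h => hui (h : v = u).symm
      tauto
    rw [hset, Finset.card_insert_of_notMem (fun h => hnadj (mem_filter.mp h).2), hdegG]
  · by_cases hvu : v = u
    · subst hvu
      rw [if_pos (Or.inr rfl)]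
      have hset : univ.filter (fun b => G.Adj v b ∨ (v = i ∧ b = v) ∨ (v = v ∧ b = i))
          = insert i (univ.filter (G.Adj v)) := by
        ext b
        simp only [mem_filter, mem_univ, true_and, mem_insert]
        tauto
      rw [hset, Finset.card_insert_of_notMem
        (fun h => hnadj (G.adj_symm (mem_filter.mp h).2)), hdegG]
    · rw [if_neg (by tauto)]
      have hset : univ.filter (fun b => G.Adj v b ∨ (v = i ∧ b = u) ∨ (v = u ∧ b = i))
          = univ.filter (G.Adj v) := by
        ext b
        simp only [mem_filter, mem_univ, true_and]
        constructor
        · rintro (h | ⟨h, -⟩ | ⟨h, -⟩)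
          · exact h
          · exact absurd h hvi
          · exact absurd h hvu
        · exact Or.inl
      rw [hset, hdegG]


lemma graphic_le {n : ℕ} (D : Fin n → ℕ) (hD : IsGraphic D) (i : Fin n) : D i ≤ n - 1 := by
  obtain ⟨G, _, hG⟩ := hD
  have := G.degree_lt_card_verts i
  rw [hG, Fintype.card_fin] at this
  omega

lemma raise {n : ℕ} (A B : Fin n → ℕ) (hA : ∀ i, A i ≤ B i) (hB : ∀ i, B i ≤ n - 1) :
    ∀ m (D : Fin n → ℕ), devL D A ≤ m → IsGraphic D →
      ∃ D', IsGraphic D' ∧ (∀ i, A i ≤ D' i ∧ D' i ≤ n - 1) ∧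
        devU D' B + devL D' A ≤ devU D B + devL D A := by
  intro m
  induction m with
  | zero =>
    intro D hm hD
    refine ⟨D, hD, fun i => ⟨?_, graphic_le D hD i⟩, le_rfl⟩
    have h0 : devL D A = 0 := Nat.le_zero.mp hm
    have := Finset.sum_eq_zero_iff.mp h0 i (mem_univ i)
    omega
  | succ m ih =>
    intro D hm hD
    by_cases hall : ∀ i, A i ≤ D i
    · exact ⟨D, hD, fun i => ⟨hall i, graphic_le D hD i⟩, le_rfl⟩
    · push_neg at hall
      obtain ⟨i, hi⟩ := hall
      have hin : D i < n - 1 := lt_of_lt_of_le hi (le_trans (hA i) (hB i))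
      obtain ⟨u, hui, hD''⟩ := step_graphic D hD i hin
      set D'' : Fin n → ℕ := fun v => if v = i ∨ v = u then D v + 1 else D v with hD''def
      have hDi : D'' i = D i + 1 := by simp [hD''def]
      have hDu : D'' u = D u + 1 := by simp [hD''def]
      have hDo : ∀ v, v ≠ i → v ≠ u → D'' v = D v := by
        intro v h1 h2; simp [hD''def, h1, h2]
      have hdec : devL D'' A < devL D A := by
        apply Finset.sum_lt_sum
        · intro v _
          by_cases h1 : v = i
          · subst h1; rw [hDi]; omega
          · by_cases h2 : v = u
            · subst h2; rw [hDu]; omega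
            · rw [hDo v h1 h2]
        · exact ⟨i, mem_univ i, by rw [hDi]; omega⟩
      have hkey : devU D'' B + devL D'' A ≤ devU D B + devL D A := by
        have e1 : ∀ (E : Fin n → ℕ), devU E B + devL E A = ∑ v, ((E v - B v) + (A v - E v)) := by
          intro E
          rw [devU, devL, ← Finset.sum_add_distrib]
        rw [e1, e1]
        have hu_mem : u ∈ univ.erase i := mem_erase.mpr ⟨hui, mem_univ u⟩
        rw [← Finset.add_sum_erase _ _ (mem_univ i),
            ← Finset.add_sum_erase _ _ hu_mem,
            ← Finset.add_sum_erase _ (fun v => (D v - B v) + (A v - D v)) (mem_univ i),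
            ← Finset.add_sum_erase _ (fun v => (D v - B v) + (A v - D v)) hu_mem]
        have hrest : ∑ v ∈ (univ.erase i).erase u, ((D'' v - B v) + (A v - D'' v))
            = ∑ v ∈ (univ.erase i).erase u, ((D v - B v) + (A v - D v)) := by
          apply Finset.sum_congr rfl
          intro v hv
          rw [hDo v (mem_erase.mp (mem_erase.mp hv).2).1 (mem_erase.mp hv).1]
        rw [hrest]
        have h1 : (D'' i - B i) + (A i - D'' i) + 1 ≤ (D i - B i) + (A i - D i) := by
          rw [hDi]
          have := hA i
          omega
        have h2 : (D'' u - B u) + (A u - D'' u) ≤ (D u - B u) + (A u - D u) + 1 := by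
          rw [hDu]
          omega
        omega
      obtain ⟨D', h1, h2, h3⟩ := ih D'' (by omega) hD''
      exact ⟨D', h1, h2, le_trans h3 hkey⟩

theorem stmt_13 {n : ℕ} (A B R : Fin n → ℕ)
    (hS : ∀ i, A i ≤ B i ∧ B i ≤ n - 1)
    (hR : MinUpper A B R)
    (D₀ : Fin n → ℕ) (hD₀ : IsGraphic D₀) (hbet : Between A D₀ R) :
    devU D₀ B + devL D₀ A =
      sInf {v : ℕ | ∃ D : Fin n → ℕ, IsGraphic D ∧ v = devU D B + devL D A} ∧
    devU D₀ B + devL D₀ A = ∑ i, (R i - B i) := by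
  classical
  obtain ⟨hRB, -, hmin⟩ := hR
  have hL0 : devL D₀ A = 0 :=
    Finset.sum_eq_zero fun i _ => by have := (hbet i).1; omega
  have lower : ∀ D : Fin n → ℕ, IsGraphic D → ∑ i, (R i - B i) ≤ devU D B + devL D A := by
    intro D hD
    obtain ⟨D', hD', hbd, hle⟩ :=
      raise A B (fun i => (hS i).1) (fun i => (hS i).2) (devL D A) D le_rfl hD
    have hmin' := hmin (fun i => max (B i) (D' i))
      (fun i => ⟨le_max_left _ _, max_le (hS i).2 (hbd i).2⟩)
      ⟨D', hD', fun i => ⟨(hbd i).1, le_max_right _ _⟩⟩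
    calc ∑ i, (R i - B i) ≤ ∑ i, (max (B i) (D' i) - B i) := hmin'
      _ = devU D' B := Finset.sum_congr rfl fun i _ => by omega
      _ ≤ devU D B + devL D A := le_trans (Nat.le_add_right _ _) hle
  have upper : devU D₀ B ≤ ∑ i, (R i - B i) :=
    Finset.sum_le_sum fun i _ => Nat.sub_le_sub_right (hbet i).2 _
  have eq1 : devU D₀ B + devL D₀ A = ∑ i, (R i - B i) := by
    have := lower D₀ hD₀
    omega
  refine ⟨?_, eq1⟩
  have hmem : devU D₀ B + devL D₀ A ∈
      {v : ℕ | ∃ D : Fin n → ℕ, IsGraphic D ∧ v = devU D B + devL D A} := ⟨D₀, hD₀, rfl⟩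
  refine le_antisymm ?_ (Nat.sInf_le hmem)
  apply le_csInf ⟨_, hmem⟩
  rintro v ⟨D, hD, rfl⟩
  rw [eq1]
  exact lower D hD
end

section
/- Let S = (A,B) be an interval sequence and let R be the set of sequences R with B ≤ R ≤ ⊤ such that (A,R) is realizable and Σ_i(r_i − b_i) is minimum. Then R is closed under levelling operations within [B,⊤]: if R ∈ R, r_α > r_β, and π(R,α,β) lies in [B,⊤], then π(R,α,β) ∈ R. In particular, R contains a sequence that is levelled with respect to (B,⊤). -/
open Finset

lemma isGraphic_comap {n : ℕ} {D : Fin n → ℕ} (hg : IsGraphic D) (σ : Equiv.Perm (Fin n)) :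
    IsGraphic (fun i => D (σ i)) := by
  obtain ⟨G, inst, hdeg⟩ := hg
  refine ⟨G.comap σ, fun a b => inst (σ a) (σ b), fun i => ?_⟩
  show (SimpleGraph.comap σ G).degree i = D (σ i)
  rw [← hdeg (σ i), ← SimpleGraph.card_neighborSet_eq_degree,
    ← SimpleGraph.card_neighborSet_eq_degree]
  exact Fintype.card_congr (Equiv.subtypeEquiv σ (fun y => Iff.rfl))

lemma isGraphic_lvl {n : ℕ} {D : Fin n → ℕ} {α β : Fin n} (hg : IsGraphic D)
    (hne : α ≠ β) (hlt : D β < D α) : IsGraphic (lvl D α β) := by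
  rcases eq_or_lt_of_le (Nat.succ_le_of_lt hlt) with heq | hlt2
  · -- swap case
    have h := isGraphic_comap hg (Equiv.swap α β)
    have : (fun i => D (Equiv.swap α β i)) = lvl D α β := by
      funext i
      rcases eq_or_ne i α with rfl | hiα
      · simp [Equiv.swap_apply_left, lvl]; omega
      rcases eq_or_ne i β with rfl | hiβ
      · simp [Equiv.swap_apply_right, lvl, hne.symm]; omega
      · simp [Equiv.swap_apply_of_ne_of_ne hiα hiβ, lvl, hiα, hiβ]
    rwa [this] at h
  · -- surgery case: D α ≥ D β + 2
    obtain ⟨G, inst, hdeg⟩ := hg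
    classical
    -- find v ∈ N(α), v ∉ insert β N(β)
    have hcard : 1 ≤ ((G.neighborFinset α) \ insert β (G.neighborFinset β)).card := by
      have h1 : (G.neighborFinset α).card = D α := by rw [SimpleGraph.card_neighborFinset_eq_degree, hdeg]
      have h2 : (insert β (G.neighborFinset β)).card ≤ D β + 1 := by
        calc (insert β (G.neighborFinset β)).card ≤ (G.neighborFinset β).card + 1 :=
          Finset.card_insert_le _ _
        _ = D β + 1 := by rw [SimpleGraph.card_neighborFinset_eq_degree, hdeg]
      have h3 := Finset.card_sdiff_add_card (G.neighborFinset α) (insert β (G.neighborFinset β))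
      have h4 : (G.neighborFinset α).card ≤ ((G.neighborFinset α) ∪ insert β (G.neighborFinset β)).card :=
        Finset.card_le_card Finset.subset_union_left
      omega
    obtain ⟨v, hv⟩ := Finset.card_pos.mp hcard
    rw [Finset.mem_sdiff, Finset.mem_insert, SimpleGraph.mem_neighborFinset] at hv
    push_neg at hv
    obtain ⟨hαv, hvβ, hβv⟩ := hv
    rw [SimpleGraph.mem_neighborFinset] at hβv
    have hvα : v ≠ α := fun h => G.loopless.irrefl α (h ▸ hαv)
    have hαβ : ¬ G.Adj v β := fun h => hβv h.symm
    -- build the new graph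
    let G' : SimpleGraph (Fin n) :=
      { Adj := fun x y => (G.Adj x y ∧ ¬((x = α ∧ y = v) ∨ (x = v ∧ y = α))) ∨
          ((x = β ∧ y = v) ∨ (x = v ∧ y = β))
        symm := by
          constructor; rintro x y (⟨h1, h2⟩ | (⟨h1, h2⟩ | ⟨h1, h2⟩))
          · exact Or.inl ⟨h1.symm, fun hc => h2 (hc.elim (fun ⟨a, b⟩ => Or.inr ⟨b, a⟩)
              (fun ⟨a, b⟩ => Or.inl ⟨b, a⟩))⟩
          · exact Or.inr (Or.inr ⟨h2, h1⟩)
          · exact Or.inr (Or.inl ⟨h2, h1⟩)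
        loopless := by
          constructor; rintro x (⟨h1, _⟩ | (⟨h1, h2⟩ | ⟨h1, h2⟩))
          · exact G.loopless.irrefl x h1
          · exact hvβ (h2.symm.trans h1)
          · exact hvβ (h1.symm.trans h2) }
    have hAdj : ∀ x y, G'.Adj x y ↔ ((G.Adj x y ∧ ¬((x = α ∧ y = v) ∨ (x = v ∧ y = α))) ∨
        ((x = β ∧ y = v) ∨ (x = v ∧ y = β))) := fun x y => Iff.rfl
    have instG' : DecidableRel G'.Adj := fun x y => decidable_of_iff _ (hAdj x y).symm
    refine ⟨G', instG', fun i => ?_⟩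
    have e1 : ¬(α = β) := hne
    have e2 : ¬(α = v) := fun h => hvα h.symm
    have e3 : ¬(β = α) := fun h => hne h.symm
    have e4 : ¬(β = v) := fun h => hvβ h.symm
    have e5 : ¬(v = α) := hvα
    have e6 : ¬(v = β) := hvβ
    have hNα : G'.neighborFinset α = (G.neighborFinset α).erase v := by
      ext y
      simp only [SimpleGraph.mem_neighborFinset, Finset.mem_erase, hAdj, e1, e2,
        false_and, and_false, false_or, or_false, not_or, not_and, and_true, true_and]
      tauto
    have hNβ : G'.neighborFinset β = insert v (G.neighborFinset β) := by
      ext y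
      simp only [SimpleGraph.mem_neighborFinset, Finset.mem_insert, hAdj, e3, e4,
        false_and, and_false, false_or, or_false, not_or, not_and, and_true, true_and]
      tauto
    have hNv : G'.neighborFinset v = insert β ((G.neighborFinset v).erase α) := by
      ext y
      simp only [SimpleGraph.mem_neighborFinset, Finset.mem_insert, Finset.mem_erase, hAdj,
        e5, e6, false_and, and_false, false_or, or_false, not_or, not_and, and_true, true_and]
      tauto
    have hNo : ∀ x, x ≠ α → x ≠ β → x ≠ v → G'.neighborFinset x = G.neighborFinset x := by
      intro x hxα hxβ hxv
      ext y
      simp only [SimpleGraph.mem_neighborFinset, hAdj, hxα, hxβ, hxv,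
        false_and, and_false, false_or, or_false, not_or, not_and, and_true, true_and]
      tauto
    have hvmem : v ∈ G.neighborFinset α := (SimpleGraph.mem_neighborFinset _ _ _).mpr hαv
    rcases eq_or_ne i α with rfl | hiα
    · rw [SimpleGraph.degree, hNα, Finset.card_erase_of_mem hvmem,
        SimpleGraph.card_neighborFinset_eq_degree, hdeg]
      simp [lvl]
    rcases eq_or_ne i β with rfl | hiβ
    · rw [SimpleGraph.degree, hNβ, Finset.card_insert_of_notMem
        (fun h => hβv ((SimpleGraph.mem_neighborFinset _ _ _).mp h)),
        SimpleGraph.card_neighborFinset_eq_degree, hdeg]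
      simp [lvl, hne.symm]
    rcases eq_or_ne i v with heq | hiv
    · rw [heq]
      have hαmem : α ∈ G.neighborFinset v := (SimpleGraph.mem_neighborFinset _ _ _).mpr hαv.symm
      have hβnot : β ∉ (G.neighborFinset v).erase α := by
        simp only [Finset.mem_erase, SimpleGraph.mem_neighborFinset]
        rintro ⟨-, h⟩
        exact hβv h.symm
      rw [SimpleGraph.degree, hNv, Finset.card_insert_of_notMem hβnot,
        Finset.card_erase_of_mem hαmem, SimpleGraph.card_neighborFinset_eq_degree, hdeg]
      have h1 : 1 ≤ D v := by
        have := Finset.card_pos.mpr ⟨α, hαmem⟩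
        rwa [SimpleGraph.card_neighborFinset_eq_degree, hdeg] at this
      simp only [lvl, if_neg hvα, if_neg hvβ]
      omega
    · rw [SimpleGraph.degree, hNo i hiα hiβ hiv,
        SimpleGraph.card_neighborFinset_eq_degree, hdeg]
      simp [lvl, hiα, hiβ]

lemma spread_nonneg {n : ℕ} (D : Fin n → ℕ) : 0 ≤ spread D := by
  apply Finset.sum_nonneg
  intro r _
  apply Finset.sum_nonneg
  intro s _
  split
  · exact abs_nonneg _
  · exact le_refl 0

lemma sum_lvl_sub {n : ℕ} (R B : Fin n → ℕ) (α β : Fin n) (hne : α ≠ β)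
    (h1 : B α + 1 ≤ R α) (h2 : B β ≤ R β) :
    ∑ i, (lvl R α β i - B i) = ∑ i, (R i - B i) := by
  classical
  have hsub : ({α, β} : Finset (Fin n)) ⊆ univ := Finset.subset_univ _
  rw [← Finset.sum_sdiff hsub, ← Finset.sum_sdiff hsub (f := fun i => R i - B i)]
  congr 1
  · apply Finset.sum_congr rfl
    intro i hi
    simp only [Finset.mem_sdiff, Finset.mem_insert, Finset.mem_singleton, not_or] at hi
    simp [lvl, hi.2.1, hi.2.2]
  · rw [Finset.sum_pair hne, Finset.sum_pair hne]
    simp only [lvl, if_pos rfl, if_neg hne.symm, if_neg hne, if_true, eq_self_iff_true]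
    omega

lemma minUpper_lvl {n : ℕ} (A B : Fin n → ℕ) (hS : ∀ i, A i ≤ B i ∧ B i ≤ n - 1)
    (R : Fin n → ℕ) (α β : Fin n) (hMin : MinUpper A B R) (hne : α ≠ β) (hlt : R β < R α)
    (hB : Between B (lvl R α β) (fun _ => n - 1)) : MinUpper A B (lvl R α β) := by
  classical
  obtain ⟨hbnd, ⟨D, hDg, hDb⟩, hmin⟩ := hMin
  have hBα : B α + 1 ≤ R α := by
    have := (hB α).1
    simp only [lvl, if_pos rfl, if_true, eq_self_iff_true] at this
    omega
  -- normalization: R i = max (B i) (D i)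
  have hR''le : ∀ i, max (B i) (D i) ≤ R i := fun i => max_le (hbnd i).1 (hDb i).2
  have hR''bnd : ∀ i, B i ≤ max (B i) (D i) ∧ max (B i) (D i) ≤ n - 1 :=
    fun i => ⟨le_max_left _ _, le_trans (hR''le i) (hbnd i).2⟩
  have hR''real : Realizable A (fun i => max (B i) (D i)) :=
    ⟨D, hDg, fun i => ⟨(hDb i).1, le_max_right _ _⟩⟩
  have h1 := hmin (fun i => max (B i) (D i)) hR''bnd hR''real
  have h2 : ∀ i ∈ univ, max (B i) (D i) - B i ≤ R i - B i := fun i _ => by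
    have := hR''le i; omega
  have heach := (Finset.sum_eq_sum_iff_of_le h2).mp
    (le_antisymm (Finset.sum_le_sum h2) h1)
  have hDα : D α = R α := by
    have := heach α (Finset.mem_univ α); have := hR''le α; have := (hbnd α).1; omega
  have hDβα : D β < D α := by
    have := (hDb β).2; omega
  have hreal : Realizable A (lvl R α β) := by
    refine ⟨lvl D α β, isGraphic_lvl hDg hne hDβα, fun i => ?_⟩
    rcases eq_or_ne i α with rfl | hiα
    · simp only [lvl, if_pos rfl, if_true, eq_self_iff_true]
      have := (hS i).1
      omega
    rcases eq_or_ne i β with rfl | hiβ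
    · simp only [lvl, if_neg hiα, if_pos rfl, if_true, eq_self_iff_true]
      have := (hDb i).1; have := (hDb i).2; have := (hbnd i).1
      omega
    · simp only [lvl, if_neg hiα, if_neg hiβ]
      exact hDb i
  refine ⟨hB, hreal, fun R' hb' hr' => ?_⟩
  rw [sum_lvl_sub R B α β hne hBα (hbnd β).1]
  exact hmin R' hb' hr'

theorem stmt_14 {n : ℕ} (A B : Fin n → ℕ)
    (hS : ∀ i, A i ≤ B i ∧ B i ≤ n - 1) :
    (∀ (R : Fin n → ℕ) (α β : Fin n), MinUpper A B R → α ≠ β → R β < R α →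
        Between B (lvl R α β) (fun _ => n - 1) → MinUpper A B (lvl R α β)) ∧
    ∃ R : Fin n → ℕ, MinUpper A B R ∧ IsLevelled B (fun _ => n - 1) R := by
  classical
  have key := minUpper_lvl A B hS
  refine ⟨key, ?_⟩
  -- top is feasible
  have htopg : IsGraphic (fun _ : Fin n => n - 1) := by
    refine ⟨⊤, fun a b => inferInstanceAs (Decidable (a ≠ b)), fun i => ?_⟩
    simp [SimpleGraph.complete_graph_degree]
  have htop : (∀ i : Fin n, B i ≤ n - 1 ∧ n - 1 ≤ n - 1) ∧ Realizable A (fun _ => n - 1) := by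
    refine ⟨fun i => ⟨(hS i).2, le_refl _⟩, ⟨fun _ => n - 1, htopg, fun i => ?_⟩⟩
    exact ⟨le_trans (hS i).1 (hS i).2, le_refl _⟩
  -- find a minimizer of the volume
  set P : ℕ → Prop := fun m => ∃ R : Fin n → ℕ,
    (∀ i, B i ≤ R i ∧ R i ≤ n - 1) ∧ Realizable A R ∧ ∑ i, (R i - B i) = m with hP
  have hPex : ∃ m, P m := ⟨_, fun _ => n - 1, htop.1, htop.2, rfl⟩
  obtain ⟨R₁, hR₁b, hR₁r, hR₁s⟩ := Nat.find_spec hPex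
  have hR₁min : MinUpper A B R₁ := by
    refine ⟨hR₁b, hR₁r, fun R' hb' hr' => ?_⟩
    rw [hR₁s]
    exact Nat.find_le ⟨R', hb', hr', rfl⟩
  -- find a minimizer of spread among MinUpper
  set Q : ℕ → Prop := fun k => ∃ R : Fin n → ℕ, MinUpper A B R ∧ (spread R).toNat = k with hQ
  have hQex : ∃ k, Q k := ⟨_, R₁, hR₁min, rfl⟩
  obtain ⟨R, hRmin, hRs⟩ := Nat.find_spec hQex
  refine ⟨R, hRmin, hRmin.1, fun α β hne hlt hB => ?_⟩
  have hM := key R α β hRmin hne hlt hB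
  have hle : Nat.find hQex ≤ (spread (lvl R α β)).toNat := Nat.find_le ⟨lvl R α β, hM, rfl⟩
  have h1 := Int.toNat_of_nonneg (spread_nonneg R)
  have h2 := Int.toNat_of_nonneg (spread_nonneg (lvl R α β))
  rw [← h1, ← h2]
  exact_mod_cast hRs ▸ hle
end
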